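/- Let A = {a_n}_{n∈ℤ} ⊂ ℝ be an almost periodic set of density d, indexed so that a_n ≤ a_{n+1} for all n ∈ ℤ. Then a_n = n/d + φ(n) for all n, where φ : ℤ → ℝ is an almost periodic (Bohr) mapping on ℤ. -/

import Mathlib

/-- A set `E ⊆ ℝ` is relatively dense. -/
def RelativelyDense (E : Set ℝ) : Prop :=
  ∃ L > (0:ℝ), ∀ x : ℝ, ∃ τ ∈ E, τ ∈ Set.Ioo x (x + L)

/-- The multiset `{a n}` is an almost periodic set. -/
def IsAPSet (a : ℤ → ℝ) : Prop :=
  ∀ ε > (0:ℝ), RelativelyDense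
    {τ : ℝ | ∃ σ : ℤ ≃ ℤ, ∀ n : ℤ, |a n + τ - a (σ n)| < ε}

/-- A mapping `φ : ℤ → ℝ` is almost periodic (Bohr): for every `ε > 0` its set of
`ε`-almost periods is relatively dense in `ℤ`. -/
def IsAPMap (φ : ℤ → ℝ) : Prop :=
  ∀ ε > (0:ℝ), ∃ L : ℤ, 0 < L ∧ ∀ m : ℤ, ∃ h : ℤ, m ≤ h ∧ h ≤ m + L ∧
    ∀ n : ℤ, |φ (n + h) - φ n| < ε

/-- If `x ≤ y + C/k` for all large `k`, then `x ≤ y`. -/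
lemma aux_le_of_forall_div (x y C : ℝ) (hC : 0 ≤ C) (k₀ : ℕ)
    (H : ∀ k : ℕ, k₀ ≤ k → 1 ≤ k → x ≤ y + C / k) : x ≤ y := by
  by_contra hxy
  push_neg at hxy
  obtain ⟨k, hk⟩ := exists_nat_gt (max (max (C / (x - y)) (k₀ : ℝ)) 0)
  have hk0 : (0:ℝ) < k := lt_of_le_of_lt (le_max_right _ 0) hk
  have hk1 : 1 ≤ k := Nat.cast_pos.mp hk0
  have hkk0 : k₀ ≤ k := by
    have : (k₀:ℝ) < k := lt_of_le_of_lt (le_trans (le_max_right _ _) (le_max_left _ 0)) hk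
    exact_mod_cast this.le
  have hCk : C / k < x - y := by
    have h1 : C / (x - y) < k := lt_of_le_of_lt (le_trans (le_max_left _ _) (le_max_left _ 0)) hk
    rcases eq_or_lt_of_le hC with h | h
    · rw [← h]; simpa using (by linarith : (0:ℝ) < x - y)
    · rw [div_lt_iff₀ hk0]
      rw [div_lt_iff₀ (by linarith : (0:ℝ) < x - y)] at h1
      nlinarith
  have := H k hkk0 hk1
  linarith

/-- If `x ≤ y + η·B` for all `η > 0`, then `x ≤ y`. -/
lemma aux_le_of_forall_eta (x y B : ℝ) (H : ∀ η : ℝ, 0 < η → x ≤ y + η * B) : x ≤ y := by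
  by_contra hxy
  push_neg at hxy
  rcases le_or_gt B 0 with hB | hB
  · have h1 := H 1 one_pos
    nlinarith
  · have hxy' : 0 < x - y := by linarith
    have h1 := H ((x - y) / (2 * B)) (by positivity)
    have h2 : (x - y) / (2 * B) * B = (x - y) / 2 := by
      field_simp
    rw [h2] at h1
    linarith

lemma aux_le_add_div_of_mul_le {x y C k : ℝ} (hk : 0 < k) (H : k * x ≤ k * y + C) :
    x ≤ y + C / k := by
  rw [← sub_nonneg]
  have h3 : y + C / k - x = (k * y + C - k * x) / k := by field_simp
  rw [h3]
  apply div_nonneg (by linarith) hk.le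

set_option maxHeartbeats 3200000 in
/-- a monotone enumeration of an almost periodic set of density `d`
has the form `a n = n/d + φ(n)` with `φ : ℤ → ℝ` almost periodic. -/
theorem ap_set_representation (a : ℤ → ℝ)
    (hfin : ∀ x y : ℝ, {n : ℤ | a n ∈ Set.Icc x y}.Finite)
    (hap : IsAPSet a)
    (hmono : ∀ n : ℤ, a n ≤ a (n + 1))
    (d : ℝ) (hd : 0 < d)
    (hdens : ∀ η > (0:ℝ), ∃ N : ℝ, ∀ x : ℝ, ∀ h : ℝ, N < h →
      |(Nat.card {n : ℤ | a n ∈ Set.Ico x (x + h)} : ℝ) / h - d| < η) :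
    ∃ φ : ℤ → ℝ, IsAPMap φ ∧ ∀ n : ℤ, a n = n / d + φ n := by
  classical
  have M : Monotone a := monotone_int_of_le_succ hmono
  -- the set is nonempty in every long enough window
  obtain ⟨N₀, hN₀⟩ := hdens d hd
  set H0 : ℝ := max N₀ 0 + 1 with hH0def
  have hH0N : N₀ < H0 := lt_of_le_of_lt (le_max_left _ _) (lt_add_one _)
  have hH0pos : 0 < H0 := lt_of_le_of_lt (le_max_right _ _) (lt_add_one _)
  have hex : ∀ x : ℝ, ∃ n : ℤ, x ≤ a n ∧ a n < x + H0 := by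
    intro x
    have h1 := hN₀ x H0 hH0N
    by_contra hcon
    push_neg at hcon
    have hempty : {n : ℤ | a n ∈ Set.Ico x (x + H0)} = ∅ := by
      ext n
      simp only [Set.mem_setOf_eq, Set.mem_Ico, Set.mem_empty_iff_false, iff_false, not_and,
        not_lt]
      exact fun hx => hcon n hx
    rw [hempty] at h1
    have hz : ((Nat.card (∅ : Set ℤ) : ℕ) : ℝ) = 0 := by simp
    rw [hz, zero_div, zero_sub, abs_neg, abs_of_pos hd] at h1
    exact lt_irrefl d h1
  -- the greatest index with value < x
  have hGex : ∀ x : ℝ, ∃ g : ℤ, a g < x ∧ ∀ k : ℤ, a k < x → k ≤ g := by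
    intro x
    obtain ⟨n, hn1, _⟩ := hex x
    obtain ⟨n', hn'1, hn'2⟩ := hex (x - H0)
    have hn'x : a n' < x := by linarith
    refine Int.exists_greatest_of_bdd ⟨n, fun k hk => ?_⟩ ⟨n', hn'x⟩
    by_contra hkn
    push_neg at hkn
    exact absurd (M hkn.le) (not_le.mpr (lt_of_lt_of_le hk hn1))
  choose G hG1 hG2 using hGex
  have key : ∀ (x : ℝ) (k : ℤ), a k < x ↔ k ≤ G x :=
    fun x k => ⟨hG2 x k, fun h => lt_of_le_of_lt (M h) (hG1 x)⟩
  have Gmono : ∀ {x y : ℝ}, x ≤ y → G x ≤ G y :=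
    fun {x y} h => (key y _).1 (lt_of_lt_of_le (hG1 x) h)
  have Gge : ∀ (n : ℤ) (t : ℝ), 0 < t → n ≤ G (a n + t) :=
    fun n t ht => (key _ n).1 (by linarith)
  have Gle : ∀ n : ℤ, G (a n) ≤ n - 1 := by
    intro n
    by_contra hcon
    push_neg at hcon
    have h1 : n ≤ G (a n) := by omega
    have := M h1
    exact absurd (hG1 (a n)) (not_lt.mpr this)
  have Gle' : ∀ (n : ℤ) (t : ℝ), 0 < t → G (a n - t) ≤ n - 1 := by
    intro n t ht
    have := Gmono (show a n - t ≤ a n by linarith)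
    have := Gle n
    omega
  -- counting identity
  have hcount : ∀ x y : ℝ, {n : ℤ | a n ∈ Set.Ico x y} = Set.Ioc (G x) (G y) := by
    intro x y
    ext n
    simp only [Set.mem_setOf_eq, Set.mem_Ico, Set.mem_Ioc]
    constructor
    · rintro ⟨hx, hy⟩
      refine ⟨?_, (key y n).1 hy⟩
      by_contra hcon
      push_neg at hcon
      exact absurd ((key x n).2 hcon) (not_lt.mpr hx)
    · rintro ⟨hx, hy⟩
      refine ⟨?_, (key y n).2 hy⟩
      by_contra hcon
      push_neg at hcon
      exact absurd ((key x n).1 hcon) (not_le.mpr hx)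
  -- density in terms of G
  have hdensG : ∀ η : ℝ, 0 < η → ∃ N : ℝ, 0 < N ∧ ∀ x y : ℝ, y - x > N →
      |((G y : ℝ) - (G x : ℝ)) - d * (y - x)| ≤ η * (y - x) := by
    intro η hη
    obtain ⟨N, hN⟩ := hdens η hη
    refine ⟨max N 0 + 1, by positivity, ?_⟩
    intro x y hxy
    have hyx0 : (0:ℝ) < y - x := by
      have := le_max_right N 0; linarith
    have h1 := hN x (y - x) (by have := le_max_left N 0; linarith)
    have hGxy : G x ≤ G y := Gmono (by linarith)
    have hkey : Nat.card {n : ℤ | a n ∈ Set.Ico x (x + (y - x))} = (G y - G x).toNat := by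
      rw [show x + (y - x) = y by ring, hcount]
      rw [Nat.card_coe_set_eq, ← Finset.coe_Ioc, Set.ncard_coe_finset, Int.card_Ioc]
    rw [hkey] at h1
    have hcast : ((G y - G x).toNat : ℝ) = (G y : ℝ) - (G x : ℝ) := by
      have hnn : (0:ℤ) ≤ G y - G x := by omega
      have h4 : ((G y - G x).toNat : ℤ) = G y - G x := Int.toNat_of_nonneg hnn
      calc ((G y - G x).toNat : ℝ) = (((G y - G x).toNat : ℤ) : ℝ) := by norm_cast
        _ = ((G y - G x : ℤ) : ℝ) := by rw [h4]
        _ = (G y : ℝ) - (G x : ℝ) := by push_cast; ring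
    rw [hcast] at h1
    have h2 := abs_lt.mp h1
    have hcc : ((G y : ℝ) - (G x : ℝ)) / (y - x) * (y - x) = (G y : ℝ) - (G x : ℝ) :=
      div_mul_cancel₀ _ (ne_of_gt hyx0)
    rw [abs_le]
    constructor <;> nlinarith [h2.1, h2.2]
  -- counting inequality from an ε-almost period
  have countI : ∀ (σ : ℤ ≃ ℤ) (τ δ : ℝ), 0 < δ → (∀ n, |a n + τ - a (σ n)| < δ) →
      ∀ x y : ℝ, x ≤ y → G y - G x ≤ G (y + τ + δ) - G (x + τ - δ) := by
    intro σ τ δ hδ hσ x y hxy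
    have hmaps : ∀ n ∈ Finset.Ioc (G x) (G y),
        σ n ∈ Finset.Ioc (G (x + τ - δ)) (G (y + τ + δ)) := by
      intro n hn
      rw [Finset.mem_Ioc] at hn ⊢
      have hxn : x ≤ a n := by
        by_contra hcon
        push_neg at hcon
        exact absurd ((key x n).1 hcon) (not_le.mpr hn.1)
      have hny : a n < y := (key y n).2 hn.2
      have hab := abs_lt.mp (hσ n)
      constructor
      · by_contra hcon
        push_neg at hcon
        have := (key (x + τ - δ) (σ n)).2 hcon
        linarith [hab.2]
      · exact (key (y + τ + δ) (σ n)).1 (by linarith [hab.1])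
    have hcard := Finset.card_le_card_of_injOn σ hmaps (σ.injective.injOn)
    rw [Int.card_Ioc, Int.card_Ioc] at hcard
    have hB : 0 ≤ G (y + τ + δ) - G (x + τ - δ) := by
      have := Gmono (show x + τ - δ ≤ y + τ + δ by linarith)
      omega
    omega
  -- the shift lemma: an almost period yields an index shift
  have shift : ∀ (σ : ℤ ≃ ℤ) (τ δ : ℝ), 0 < δ → (∀ n, |a n + τ - a (σ n)| < δ) →
      ∃ h : ℤ, ∀ n : ℤ, |a (n + h) - a n - τ| ≤ 5 * δ := by
    intro σ τ δ hδ hσ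
    have hσ' : ∀ n, |a n + (-τ) - a (σ.symm n)| < δ := by
      intro n
      have h1 := hσ (σ.symm n)
      rw [Equiv.apply_symm_apply] at h1
      rw [show a n + -τ - a (σ.symm n) = -(a (σ.symm n) + τ - a n) by ring, abs_neg]
      exact h1
    have I1 := countI σ τ δ hδ hσ
    have I2 : ∀ x y : ℝ, x + 2*δ ≤ y → G (y + τ - δ) - G (x + τ + δ) ≤ G y - G x := by
      intro x y hxy
      have h1 := countI σ.symm (-τ) δ hδ hσ' (x + τ + δ) (y + τ - δ) (by linarith)
      rw [show y + τ - δ + -τ + δ = y by ring, show x + τ + δ + -τ - δ = x by ring] at h1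
      exact h1
    have pair : ∀ m n : ℤ, G (a m + τ - 5*δ) + 1 - m ≤ G (a n + τ + 5*δ) - n := by
      intro m n
      rcases le_or_gt (a m) (a n + 8*δ) with hc | hc
      · have h1 := I1 (a m - 4*δ) (a n + 4*δ) (by linarith)
        rw [show a n + 4*δ + τ + δ = a n + τ + 5*δ by ring,
            show a m - 4*δ + τ - δ = a m + τ - 5*δ by ring] at h1
        have h2 := Gge n (4*δ) (by linarith)
        have h3 := Gle' m (4*δ) (by linarith)
        omega
      · have h1 := I2 (a n + 2*δ) (a m - 4*δ) (by linarith)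
        rw [show a m - 4*δ + τ - δ = a m + τ - 5*δ by ring,
            show a n + 2*δ + τ + δ = a n + τ + 3*δ by ring] at h1
        have h2 := Gmono (show a n + τ + 3*δ ≤ a n + τ + 5*δ by linarith)
        have h3 := Gge n (2*δ) (by linarith)
        have h4 := Gle' m (4*δ) (by linarith)
        omega
    obtain ⟨h, ⟨m₀, hm₀⟩, hmax⟩ := Int.exists_greatest_of_bdd
      (P := fun z : ℤ => ∃ m : ℤ, z = G (a m + τ - 5*δ) + 1 - m)
      ⟨G (a 0 + τ + 5*δ), by rintro z ⟨m, rfl⟩; have := pair m 0; omega⟩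
      ⟨G (a 0 + τ - 5*δ) + 1 - 0, ⟨0, rfl⟩⟩
    refine ⟨h, fun n => ?_⟩
    have hub : n + h ≤ G (a n + τ + 5*δ) := by
      have := pair m₀ n
      omega
    have hlb : G (a n + τ - 5*δ) < n + h := by
      have := hmax (G (a n + τ - 5*δ) + 1 - n) ⟨n, rfl⟩
      omega
    have h1 : a (n + h) < a n + τ + 5*δ := (key _ (n + h)).2 hub
    have h2 : a n + τ - 5*δ ≤ a (n + h) := by
      by_contra hcon
      push_neg at hcon
      have := (key _ (n + h)).1 hcon
      omega
    rw [abs_le]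
    constructor <;> linarith
  -- iteration of the shift
  have iter : ∀ (h : ℤ) (τ c : ℝ), (∀ n, |a (n + h) - a n - τ| ≤ c) →
      ∀ (k : ℕ) (n : ℤ), |a (n + (k:ℤ) * h) - a n - (k:ℝ) * τ| ≤ (k:ℝ) * c := by
    intro h τ c hstep k
    induction k with
    | zero => intro n; simp
    | succ k ih =>
      intro n
      have h1 := abs_le.mp (ih (n + h))
      have h2 := abs_le.mp (hstep n)
      have heq : n + ((k:ℤ) + 1) * h = n + h + (k:ℤ) * h := by ring
      push_cast
      rw [heq]
      rw [abs_le]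
      constructor <;> nlinarith [h1.1, h1.2, h2.1, h2.2]
  -- upper bound from density
  have upperGen : ∀ (h : ℤ) (β : ℝ), (∀ k : ℕ, (k:ℤ) * h ≤ G (a 0 + (k:ℝ) * β + 1)) →
      (h:ℝ) ≤ d * β := by
    intro h β hub
    apply aux_le_of_forall_eta _ _ (|β| + 1)
    intro η hη
    obtain ⟨N, hNpos, hdG⟩ := hdensG η hη
    have g0u : (G (a 0) : ℝ) ≤ -1 := by exact_mod_cast Gle 0
    rcases lt_trichotomy 0 β with hβ | hβ | hβ
    · -- β > 0
      have step : ∀ k : ℕ, (⌈N/β⌉₊ + 1) ≤ k → 1 ≤ k → (h:ℝ) ≤ (d + η) * β + (d + η) / k := by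
        intro k hk1 hk2
        have hkR : (0:ℝ) < k := by exact_mod_cast hk2
        have hlen : (a 0 + (k:ℝ)*β + 1) - a 0 > N := by
          have hc : (⌈N/β⌉₊ : ℝ) + 1 ≤ k := by exact_mod_cast hk1
          have hc2 : N / β ≤ ⌈N/β⌉₊ := Nat.le_ceil _
          have : N / β < (k:ℝ) := by linarith
          rw [div_lt_iff₀ hβ] at this
          nlinarith
        have hG1 := abs_le.mp (hdG (a 0) (a 0 + (k:ℝ)*β + 1) hlen)
        have c1 : ((k:ℝ)) * h ≤ (G (a 0 + (k:ℝ)*β + 1) : ℝ) := by exact_mod_cast hub k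
        have hlen2 : (a 0 + (k:ℝ)*β + 1) - a 0 = (k:ℝ)*β + 1 := by ring
        rw [hlen2] at hG1
        apply aux_le_add_div_of_mul_le hkR
        linarith [hG1.2, c1, g0u]
      have hfin2 := aux_le_of_forall_div (h:ℝ) ((d + η)*β) (d + η) (by linarith) _ step
      have e : η * β ≤ η * |β| := mul_le_mul_of_nonneg_left (le_abs_self β) hη.le
      nlinarith
    · -- β = 0
      have hh0 : (h:ℝ) ≤ 0 := by
        by_contra hcon
        push_neg at hcon
        have hh1 : 1 ≤ h := by
          have : (0:ℤ) < h := by exact_mod_cast hcon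
          omega
        set k : ℕ := (G (a 0 + 1)).toNat + 1 with hkdef
        have h1 := hub k
        rw [← hβ] at h1
        simp only [mul_zero, add_zero] at h1
        have h2 : (k:ℤ) * 1 ≤ (k:ℤ) * h := by
          apply mul_le_mul_of_nonneg_left hh1 (by positivity)
        omega
      have hb0 : β = 0 := hβ.symm
      rw [hb0]
      simp only [abs_zero, mul_zero, zero_add, mul_one]
      linarith
    · -- β < 0
      have step : ∀ k : ℕ, (⌈(N+1)/(-β)⌉₊ + 1) ≤ k → 1 ≤ k →
          (h:ℝ) ≤ (d - η) * β + |d - η| / k := by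
        intro k hk1 hk2
        have hkR : (0:ℝ) < k := by exact_mod_cast hk2
        have hlen : a 0 - (a 0 + (k:ℝ)*β + 1) > N := by
          have hc : (⌈(N+1)/(-β)⌉₊ : ℝ) + 1 ≤ k := by exact_mod_cast hk1
          have hc2 : (N+1) / (-β) ≤ ⌈(N+1)/(-β)⌉₊ := Nat.le_ceil _
          have h3 : (N+1) / (-β) < (k:ℝ) := by linarith
          rw [div_lt_iff₀ (by linarith : (0:ℝ) < -β)] at h3
          nlinarith
        have hG1 := abs_le.mp (hdG (a 0 + (k:ℝ)*β + 1) (a 0) hlen)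
        have c1 : ((k:ℝ)) * h ≤ (G (a 0 + (k:ℝ)*β + 1) : ℝ) := by exact_mod_cast hub k
        have hlen2 : a 0 - (a 0 + (k:ℝ)*β + 1) = -((k:ℝ)*β) - 1 := by ring
        rw [hlen2] at hG1
        apply aux_le_add_div_of_mul_le hkR
        have habs : d - η ≤ |d - η| := le_abs_self _
        linarith [hG1.1, c1, g0u]
      have hfin2 := aux_le_of_forall_div (h:ℝ) ((d - η)*β) (|d - η|) (abs_nonneg _) _ step
      have e : η * (-β) ≤ η * |β| := mul_le_mul_of_nonneg_left (neg_le_abs β) hη.le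
      nlinarith
  -- lower bound from density
  have lowerGen : ∀ (h : ℤ) (γ : ℝ), (∀ k : ℕ, G (a 0 + (k:ℝ) * γ) + 1 ≤ (k:ℤ) * h) →
      d * γ ≤ (h:ℝ) := by
    intro h γ hlbk
    have g0l : (0:ℝ) ≤ (G (a 0 + 1) : ℝ) := by exact_mod_cast Gge 0 1 one_pos
    apply aux_le_of_forall_eta _ _ (|γ| + 1)
    intro η hη
    obtain ⟨N, hNpos, hdG⟩ := hdensG η hη
    rcases lt_trichotomy 0 γ with hγ | hγ | hγ
    · -- γ > 0
      have step : ∀ k : ℕ, (⌈(N+2)/γ⌉₊ + 1) ≤ k → 1 ≤ k →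
          (d - η) * γ ≤ (h:ℝ) + |d - η| / k := by
        intro k hk1 hk2
        have hkR : (0:ℝ) < k := by exact_mod_cast hk2
        have hlen : (a 0 + (k:ℝ)*γ) - (a 0 + 1) > N := by
          have hc : (⌈(N+2)/γ⌉₊ : ℝ) + 1 ≤ k := by exact_mod_cast hk1
          have hc2 : (N+2) / γ ≤ ⌈(N+2)/γ⌉₊ := Nat.le_ceil _
          have h3 : (N+2) / γ < (k:ℝ) := by linarith
          rw [div_lt_iff₀ hγ] at h3
          nlinarith
        have hG1 := abs_le.mp (hdG (a 0 + 1) (a 0 + (k:ℝ)*γ) hlen)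
        have c1 : (G (a 0 + (k:ℝ)*γ) : ℝ) + 1 ≤ ((k:ℝ)) * h := by exact_mod_cast hlbk k
        have hlen2 : (a 0 + (k:ℝ)*γ) - (a 0 + 1) = (k:ℝ)*γ - 1 := by ring
        rw [hlen2] at hG1
        apply aux_le_add_div_of_mul_le hkR
        have habs : d - η ≤ |d - η| := le_abs_self _
        linarith [hG1.1, c1, g0l]
      have hfin2 := aux_le_of_forall_div ((d - η)*γ) (h:ℝ) (|d - η|) (abs_nonneg _) _ step
      have e : η * γ ≤ η * |γ| := mul_le_mul_of_nonneg_left (le_abs_self γ) hη.le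
      nlinarith
    · -- γ = 0
      have hh0 : (0:ℝ) ≤ (h:ℝ) := by
        by_contra hcon
        push_neg at hcon
        have hh1 : h ≤ -1 := by
          have : h < 0 := by exact_mod_cast hcon
          omega
        set k : ℕ := (-(G (a 0) + 1)).toNat + 1 with hkdef
        have h1 := hlbk k
        rw [← hγ] at h1
        simp only [mul_zero, add_zero] at h1
        have h2 : (k:ℤ) * h ≤ (k:ℤ) * (-1) := by
          apply mul_le_mul_of_nonneg_left hh1 (by positivity)
        omega
      have hg0 : γ = 0 := hγ.symm
      rw [hg0]
      simp only [abs_zero, mul_zero, zero_add, mul_one]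
      linarith
    · -- γ < 0
      have step : ∀ k : ℕ, (⌈(N+1)/(-γ)⌉₊ + 1) ≤ k → 1 ≤ k →
          (d + η) * γ ≤ (h:ℝ) + (d + η) / k := by
        intro k hk1 hk2
        have hkR : (0:ℝ) < k := by exact_mod_cast hk2
        have hlen : (a 0 + 1) - (a 0 + (k:ℝ)*γ) > N := by
          have hc : (⌈(N+1)/(-γ)⌉₊ : ℝ) + 1 ≤ k := by exact_mod_cast hk1
          have hc2 : (N+1) / (-γ) ≤ ⌈(N+1)/(-γ)⌉₊ := Nat.le_ceil _
          have h3 : (N+1) / (-γ) < (k:ℝ) := by linarith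
          rw [div_lt_iff₀ (by linarith : (0:ℝ) < -γ)] at h3
          nlinarith
        have hG1 := abs_le.mp (hdG (a 0 + (k:ℝ)*γ) (a 0 + 1) hlen)
        have c1 : (G (a 0 + (k:ℝ)*γ) : ℝ) + 1 ≤ ((k:ℝ)) * h := by exact_mod_cast hlbk k
        have hlen2 : (a 0 + 1) - (a 0 + (k:ℝ)*γ) = 1 - (k:ℝ)*γ := by ring
        rw [hlen2] at hG1
        apply aux_le_add_div_of_mul_le hkR
        linarith [hG1.2, c1, g0l]
      have hfin2 := aux_le_of_forall_div ((d + η)*γ) (h:ℝ) (d + η) (by linarith) _ step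
      have e : η * (-γ) ≤ η * |γ| := mul_le_mul_of_nonneg_left (neg_le_abs γ) hη.le
      nlinarith
  -- the limit lemma
  have limit : ∀ (h : ℤ) (τ c : ℝ), 0 < c →
      (∀ k : ℕ, |a ((k:ℤ) * h) - a 0 - (k:ℝ) * τ| ≤ (k:ℝ) * c) →
      d * (τ - c) ≤ (h:ℝ) ∧ (h:ℝ) ≤ d * (τ + c) := by
    intro h τ c hc hk
    constructor
    · apply lowerGen
      intro k
      have h1 := (abs_le.mp (hk k)).1
      have h2 : a 0 + (k:ℝ) * (τ - c) ≤ a ((k:ℤ) * h) := by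
        have e : (k:ℝ) * (τ - c) = (k:ℝ) * τ - (k:ℝ) * c := by ring
        linarith
      have h3 := Gmono h2
      have h4 := Gle ((k:ℤ) * h)
      omega
    · apply upperGen
      intro k
      have h1 := (abs_le.mp (hk k)).2
      have h2 : a ((k:ℤ) * h) + 1 ≤ a 0 + (k:ℝ) * (τ + c) + 1 := by
        have e : (k:ℝ) * (τ + c) = (k:ℝ) * τ + (k:ℝ) * c := by ring
        linarith
      have h3 := Gmono h2
      have h4 := Gge ((k:ℤ) * h) 1 one_pos
      omega
  -- assembly
  refine ⟨fun n => a n - (n:ℝ) / d, ?_, fun n => by ring⟩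
  intro ε hε
  set δ : ℝ := ε / 11 with hδdef
  have hδ : 0 < δ := by positivity
  obtain ⟨L₀, hL₀, hrel⟩ := hap δ hδ
  refine ⟨⌈d * (L₀ + 10*δ)⌉ + 1, ?_, ?_⟩
  · have h1 : (0:ℝ) < d * (L₀ + 10*δ) := by positivity
    have := Int.ceil_nonneg h1.le
    omega
  intro m
  obtain ⟨τ, hτE, hτmem⟩ := hrel ((m:ℝ)/d + 5*δ)
  obtain ⟨σ, hσ⟩ := hτE
  obtain ⟨h, hh⟩ := shift σ τ δ hδ hσ
  have hiterk : ∀ k : ℕ, |a ((k:ℤ) * h) - a 0 - (k:ℝ) * τ| ≤ (k:ℝ) * (5*δ) := by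
    intro k
    have := iter h τ (5*δ) hh k 0
    simpa using this
  obtain ⟨hlim1, hlim2⟩ := limit h τ (5*δ) (by positivity) hiterk
  obtain ⟨hτ1, hτ2⟩ := hτmem
  have hτd1 : (m:ℝ) < d * (τ - 5*δ) := by
    have : (m:ℝ)/d < τ - 5*δ := by linarith
    calc (m:ℝ) = d * ((m:ℝ)/d) := by field_simp
    _ < d * (τ - 5*δ) := by exact mul_lt_mul_of_pos_left this hd
  have hmh : m ≤ h := by
    have : (m:ℝ) < h := lt_of_lt_of_le hτd1 hlim1
    exact_mod_cast this.le
  have hhm : h ≤ m + (⌈d * (L₀ + 10*δ)⌉ + 1) := by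
    have h1 : (h:ℝ) ≤ d * (τ + 5*δ) := hlim2
    have h2 : d * (τ + 5*δ) < d * ((m:ℝ)/d + L₀ + 10*δ) := by
      apply mul_lt_mul_of_pos_left _ hd
      linarith
    have h3 : d * ((m:ℝ)/d + L₀ + 10*δ) = (m:ℝ) + d * (L₀ + 10*δ) := by field_simp; ring
    have h4 := Int.le_ceil (d * (L₀ + 10*δ))
    have : (h:ℝ) < (m:ℝ) + (⌈d * (L₀ + 10*δ)⌉ : ℝ) + 1 := by linarith
    have : (h:ℝ) < ((m + (⌈d * (L₀ + 10*δ)⌉ + 1) : ℤ) : ℝ) := by push_cast; linarith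
    exact_mod_cast this.le
  refine ⟨h, hmh, hhm, ?_⟩
  intro n
  simp only
  have h1 := abs_le.mp (hh n)
  have hτh : |τ - (h:ℝ)/d| ≤ 5*δ := by
    rw [abs_le]
    constructor
    · have : (h:ℝ)/d ≤ τ + 5*δ := by
        rw [div_le_iff₀ hd]
        nlinarith
      linarith
    · have : τ - 5*δ ≤ (h:ℝ)/d := by
        rw [le_div_iff₀ hd]
        nlinarith
      linarith
  have heq : (a (n + h) - ((n + h : ℤ):ℝ)/d) - (a n - (n:ℝ)/d)
      = (a (n + h) - a n - τ) + (τ - (h:ℝ)/d) := by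
    push_cast
    field_simp
    ring
  rw [heq]
  calc |(a (n + h) - a n - τ) + (τ - (h:ℝ)/d)|
      ≤ |a (n + h) - a n - τ| + |τ - (h:ℝ)/d| := abs_add_le _ _
    _ ≤ 5*δ + 5*δ := by
        have := abs_le.mpr h1
        exact add_le_add this hτh
    _ < ε := by rw [hδdef]; linarith
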